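/- (Zero-forcing lemma) Let E be a d_2×d_2 Hermitian matrix with entries a_{i,j} in the computational basis of ℂ^{d_2}. Suppose {|ψ_i⟩ = Σ_{j∈Z_m} b_{i,j}|p_j⟩|r_j⟩}_{i∈Z_m} and {|φ_k⟩ = Σ_{ℓ∈Z_n} c_{k,ℓ}|q_ℓ⟩|s_ℓ⟩}_{k∈Z_n} are two families of pairwise orthogonal vectors in ℂ^{d_1}⊗ℂ^{d_2}, where the r_j are distinct elements of Z_{d_2}, the s_ℓ are distinct elements of Z_{d_2}, and p_j, q_ℓ ∈ Z_{d_1}. If ⟨ψ_i|(I⊗E)|φ_k⟩ = 0 for all i ∈ Z_m, k ∈ Z_n, then for any j, ℓ with p_j = q_ℓ one has a_{r_j,s_ℓ} = a_{s_ℓ,r_j} = 0. -/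

import Mathlib

open Matrix

lemma helperA {d1 d2 m : ℕ} (p : Fin m → Fin d1) (r : Fin m → Fin d2)
    (g : Fin m → ℂ) (f : Fin d1 × Fin d2 → ℂ) :
    ∑ pr : Fin d1 × Fin d2, (∑ j, if pr = (p j, r j) then g j else 0) * f pr
      = ∑ j, g j * f (p j, r j) := by
  simp only [Finset.sum_mul, ite_mul, zero_mul]
  rw [Finset.sum_comm]
  simp [Finset.sum_ite_eq']

lemma helperB {d1 d2 m : ℕ} (p : Fin m → Fin d1) (r : Fin m → Fin d2)
    (hr : Function.Injective r) (g : Fin m → ℂ) (j : Fin m) :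
    (∑ j', if ((p j : Fin d1), (r j : Fin d2)) = (p j', r j') then g j' else 0) = g j := by
  rw [Finset.sum_eq_single j]
  · simp
  · intro j' _ hne
    rw [if_neg]
    simp only [Prod.mk.injEq, not_and]
    intro _ hrr
    exact hne (hr hrr).symm
  · simp

lemma helperC {d1 d2 n : ℕ} (q : Fin n → Fin d1) (s : Fin n → Fin d2)
    (c' : Fin n → ℂ) (a : Fin d2 → ℂ) (x : Fin d1) :
    (∑ y', a y' * (∑ l, if ((x : Fin d1), (y' : Fin d2)) = (q l, s l) then c' l else 0))
      = ∑ l, if x = q l then a (s l) * c' l else 0 := by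
  simp only [Finset.mul_sum, mul_ite, mul_zero]
  rw [Finset.sum_comm]
  congr 1; ext l
  simp [Prod.mk.injEq, ite_and, Finset.sum_ite_eq']

lemma auxDet {m : ℕ} (b : Fin m → Fin m → ℂ)
    (ho : ∀ i i', i ≠ i' → ∑ j, star (b i j) * b i' j = 0)
    (hnz : ∀ i, ∃ j, b i j ≠ 0) : (Matrix.of b).det ≠ 0 := by
  have hG : (Matrix.of fun i j => star (b i j)) * (Matrix.of b)ᵀ
      = Matrix.diagonal (fun i => ∑ j, star (b i j) * b i j) := by
    ext i i'
    by_cases h : i = i'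
    · subst h
      rw [Matrix.diagonal_apply_eq, Matrix.mul_apply]
      simp
    · rw [Matrix.diagonal_apply_ne _ h, Matrix.mul_apply]
      simpa using ho i i' h
  have hdiag : ∀ i, (∑ j, star (b i j) * b i j) ≠ 0 := by
    intro i h
    obtain ⟨j0, hj0⟩ := hnz i
    have h' : ((∑ j, Complex.normSq (b i j) : ℝ) : ℂ) = 0 := by
      push_cast
      simpa [Complex.normSq_eq_conj_mul_self, Complex.star_def] using h
    rw [Complex.ofReal_eq_zero] at h'
    have := (Finset.sum_eq_zero_iff_of_nonneg
      (fun j _ => Complex.normSq_nonneg _)).mp h' j0 (Finset.mem_univ _)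
    exact hj0 (Complex.normSq_eq_zero.mp this)
  have hGdet : ((Matrix.of fun i j => star (b i j)) * (Matrix.of b)ᵀ).det ≠ 0 := by
    rw [hG, Matrix.det_diagonal]
    exact Finset.prod_ne_zero_iff.mpr fun i _ => hdiag i
  intro hB
  apply hGdet
  rw [Matrix.det_mul, Matrix.det_transpose, hB, mul_zero]

/-- Zero-forcing lemma.  E is a Hermitian d_2×d_2 matrix,
{ψ_i = Σ_j b_{i,j}|p_j⟩|r_j⟩} and {φ_k = Σ_ℓ c_{k,ℓ}|q_ℓ⟩|s_ℓ⟩} are two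
families of pairwise orthogonal (nonzero) vectors in ℂ^{d_1}⊗ℂ^{d_2} with the
r_j distinct and the s_ℓ distinct.  If ⟨ψ_i|(I⊗E)|φ_k⟩ = 0 for all i, k, then
p_j = q_ℓ forces a_{r_j,s_ℓ} = a_{s_ℓ,r_j} = 0. -/
theorem stmt11 (d1 d2 m n : ℕ)
    (E : Matrix (Fin d2) (Fin d2) ℂ) (hE : E.IsHermitian)
    (b : Fin m → Fin m → ℂ) (c : Fin n → Fin n → ℂ)
    (p : Fin m → Fin d1) (q : Fin n → Fin d1)
    (r : Fin m → Fin d2) (s : Fin n → Fin d2)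
    (hr : Function.Injective r) (hs : Function.Injective s)
    (ψ : Fin m → (Fin d1 × Fin d2 → ℂ)) (φ : Fin n → (Fin d1 × Fin d2 → ℂ))
    (hψ : ∀ i, ψ i = fun pr => ∑ j, if pr = (p j, r j) then b i j else 0)
    (hφ : ∀ k, φ k = fun pr => ∑ l, if pr = (q l, s l) then c k l else 0)
    (hψo : ∀ i i', i ≠ i' → ∑ pr : Fin d1 × Fin d2, star (ψ i pr) * ψ i' pr = 0)
    (hψn : ∀ i, ψ i ≠ 0)
    (hφo : ∀ k k', k ≠ k' → ∑ pr : Fin d1 × Fin d2, star (φ k pr) * φ k' pr = 0)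
    (hφn : ∀ k, φ k ≠ 0)
    (horth : ∀ i k, ∑ x : Fin d1, ∑ y : Fin d2, ∑ y' : Fin d2,
        star (ψ i (x, y)) * E y y' * φ k (x, y') = 0)
    (j : Fin m) (l : Fin n) (hpq : p j = q l) :
    E (r j) (s l) = 0 ∧ E (s l) (r j) = 0 := by
  have hψs : ∀ i pr, star (ψ i pr) = ∑ j', if pr = (p j', r j') then star (b i j') else 0 := by
    intro i pr
    rw [hψ i]
    simp [star_sum, apply_ite]
  have hφs : ∀ k pr, star (φ k pr) = ∑ l', if pr = (q l', s l') then star (c k l') else 0 := by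
    intro k pr
    rw [hφ k]
    simp [star_sum, apply_ite]
  have hψev : ∀ i j', ψ i (p j', r j') = b i j' := by
    intro i j'
    rw [hψ i]
    exact helperB p r hr (b i) j'
  have hφev : ∀ k l', φ k (q l', s l') = c k l' := by
    intro k l'
    rw [hφ k]
    exact helperB q s hs (c k) l'
  have hbnz : ∀ i, ∃ j', b i j' ≠ 0 := by
    intro i
    by_contra h
    push_neg at h
    apply hψn i
    rw [hψ i]; funext pr; simp [h]
  have hcnz : ∀ k, ∃ l', c k l' ≠ 0 := by
    intro k
    by_contra h
    push_neg at h
    apply hφn k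
    rw [hφ k]; funext pr; simp [h]
  have hbo : ∀ i i', i ≠ i' → ∑ j', star (b i j') * b i' j' = 0 := by
    intro i i' h
    have h0 := hψo i i' h
    rw [Fintype.sum_congr _ _ (fun pr => by rw [hψs i pr])] at h0
    rw [helperA p r _ (ψ i')] at h0
    rw [← h0]
    exact Finset.sum_congr rfl fun j' _ => by rw [hψev i' j']
  have hco : ∀ k k', k ≠ k' → ∑ l', star (c k l') * c k' l' = 0 := by
    intro k k' h
    have h0 := hφo k k' h
    rw [Fintype.sum_congr _ _ (fun pr => by rw [hφs k pr])] at h0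
    rw [helperA q s _ (φ k')] at h0
    rw [← h0]
    exact Finset.sum_congr rfl fun l' _ => by rw [hφev k' l']
  have hBdet : (Matrix.of b).det ≠ 0 := auxDet b hbo hbnz
  have hCdet : (Matrix.of c).det ≠ 0 := auxDet c hco hcnz
  set M : Matrix (Fin m) (Fin n) ℂ :=
    Matrix.of (fun j' l' => if p j' = q l' then E (r j') (s l') else 0) with hM
  have key : (Matrix.of fun i j' => star (b i j')) * M * (Matrix.of c)ᵀ = 0 := by
    ext i k
    have e1 : ∀ j' : Fin m, (∑ y', E (r j') y' * φ k (p j', y'))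
        = ∑ l', if p j' = q l' then E (r j') (s l') * c k l' else 0 := by
      intro j'
      rw [hφ k]
      exact helperC q s (c k) (fun y' => E (r j') y') (p j')
    have step1 : ∑ pr : Fin d1 × Fin d2, star (ψ i pr) *
        (∑ y', E pr.2 y' * φ k (pr.1, y')) = 0 := by
      rw [← horth i k, Fintype.sum_prod_type]
      refine Finset.sum_congr rfl fun x _ => Finset.sum_congr rfl fun y _ => ?_
      rw [Finset.mul_sum]
      exact Finset.sum_congr rfl fun y' _ => by ring
    rw [Fintype.sum_congr _ _ (fun pr => by rw [hψs i pr])] at step1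
    rw [helperA p r _ _] at step1
    have step2 : ∑ j', star (b i j') *
        (∑ l', if p j' = q l' then E (r j') (s l') * c k l' else 0) = 0 := by
      have e2 : (∑ j', star (b i j') *
            (∑ l', if p j' = q l' then E (r j') (s l') * c k l' else 0))
          = ∑ j', star (b i j') * (∑ y', E (p j', r j').2 y' * φ k ((p j', r j').1, y')) :=
        Finset.sum_congr rfl fun j' _ =>
          congrArg (fun z => star (b i j') * z) (e1 j').symm
      rw [e2]
      exact step1
    show ∑ l', (∑ j', star (b i j') * M j' l') * (Matrix.of c)ᵀ l' k = 0
    rw [← step2]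
    simp only [Finset.sum_mul]
    rw [Finset.sum_comm]
    refine Finset.sum_congr rfl fun j' _ => ?_
    rw [Finset.mul_sum]
    refine Finset.sum_congr rfl fun l' _ => ?_
    by_cases h : p j' = q l' <;>
      simp only [hM, Matrix.of_apply, Matrix.transpose_apply, h, if_true, if_false,
        zero_mul, mul_zero] <;> ring
  have hBdet' : ((Matrix.of fun i j' => star (b i j')).det) ≠ 0 := by
    have heq : (Matrix.of fun i j' => star (b i j'))
        = (starRingEnd ℂ).mapMatrix (Matrix.of b) := by
      ext i j'; simp [Complex.star_def, RingHom.mapMatrix]; rfl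
    rw [heq, ← RingHom.map_det]
    simpa using hBdet
  have hMzero : M = 0 := by
    have hBu : IsUnit (Matrix.of fun i j' => star (b i j')).det :=
      isUnit_iff_ne_zero.mpr hBdet'
    have hCu : IsUnit ((Matrix.of c)ᵀ).det := by
      rw [Matrix.det_transpose]; exact isUnit_iff_ne_zero.mpr hCdet
    have h1 : (Matrix.of fun i j' => star (b i j')) * (M * (Matrix.of c)ᵀ) = 0 := by
      rw [← Matrix.mul_assoc]; exact key
    have h2 : M * (Matrix.of c)ᵀ = 0 := by
      calc M * (Matrix.of c)ᵀ
          = ((Matrix.of fun i j' => star (b i j'))⁻¹ * (Matrix.of fun i j' => star (b i j')))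
              * (M * (Matrix.of c)ᵀ) := by
            rw [Matrix.nonsing_inv_mul _ hBu, Matrix.one_mul]
        _ = (Matrix.of fun i j' => star (b i j'))⁻¹
              * ((Matrix.of fun i j' => star (b i j')) * (M * (Matrix.of c)ᵀ)) := by
            rw [Matrix.mul_assoc]
        _ = 0 := by rw [h1, Matrix.mul_zero]
    calc M = M * ((Matrix.of c)ᵀ * ((Matrix.of c)ᵀ)⁻¹) := by
          rw [Matrix.mul_nonsing_inv _ hCu, Matrix.mul_one]
      _ = (M * (Matrix.of c)ᵀ) * ((Matrix.of c)ᵀ)⁻¹ := by rw [Matrix.mul_assoc]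
      _ = 0 := by rw [h2, Matrix.zero_mul]
  have hMjl : M j l = 0 := by rw [hMzero]; rfl
  rw [hM] at hMjl
  simp only [Matrix.of_apply, if_pos hpq] at hMjl
  refine ⟨hMjl, ?_⟩
  rw [← hE.apply, hMjl, star_zero]
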